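/- arXiv:1307.1105 — 3 statements merged into one kernel-verified Lean document; each statement's English description precedes it below -/
import Mathlib

section
/- Let u, h, ρ be smooth fields on ℝ × ℝ³ with ρ > 0 everywhere, and set ω = ∇×u. Assume the barotropic Crocco momentum equation ∂u/∂t − u×ω + ∇(h + |u|²/2) = 0 and the mass continuity equation ∂ρ/∂t + ∇·(ρu) = 0. Then (∂/∂t + u·∇)( (u·ω)/ρ ) = −(ω/ρ)·∇( h − |u|²/2 ). -/
noncomputable section

/-- Vectors in ℝ³. -/
abbrev Vec3 : Type := Fin 3 → ℝ

/-- Points of space-time: `(t, x)` with `t : ℝ`, `x : Fin 3 → ℝ`. -/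
abbrev Pt : Type := ℝ × Vec3

/-- Euclidean dot product on ℝ³. -/
def dot3 (a b : Vec3) : ℝ := ∑ i, a i * b i

/-- Cross product on ℝ³. -/
def cross3 (a b : Vec3) : Vec3 :=
  ![a 1 * b 2 - a 2 * b 1, a 2 * b 0 - a 0 * b 2, a 0 * b 1 - a 1 * b 0]

/-- Spatial partial derivative ∂f/∂xᵢ of a scalar field. -/
def pd (i : Fin 3) (f : Pt → ℝ) (p : Pt) : ℝ :=
  fderiv ℝ (fun x => f (p.1, x)) p.2 (Pi.single i 1)

/-- Time derivative ∂f/∂t of a scalar field. -/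
def dt (f : Pt → ℝ) (p : Pt) : ℝ := deriv (fun s => f (s, p.2)) p.1

/-- Time derivative of a vector field, componentwise. -/
def dtVec (F : Pt → Vec3) (p : Pt) : Vec3 := fun i => dt (fun q => F q i) p

/-- Spatial gradient ∇f of a scalar field. -/
def grad3 (f : Pt → ℝ) (p : Pt) : Vec3 := fun i => pd i f p

/-- Spatial divergence ∇·F of a vector field. -/
def div3 (F : Pt → Vec3) (p : Pt) : ℝ := ∑ i, pd i (fun q => F q i) p

/-- Spatial curl ∇×F of a vector field. -/
def curl3 (F : Pt → Vec3) (p : Pt) : Vec3 :=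
  ![pd 1 (fun q => F q 2) p - pd 2 (fun q => F q 1) p,
    pd 2 (fun q => F q 0) p - pd 0 (fun q => F q 2) p,
    pd 0 (fun q => F q 1) p - pd 1 (fun q => F q 0) p]

/-- Directional derivative (u·∇)f of a scalar field. -/
def dirD (u : Pt → Vec3) (f : Pt → ℝ) (p : Pt) : ℝ := ∑ i, u p i * pd i f p

/-- Directional derivative (u·∇)F of a vector field. -/
def dirDVec (u F : Pt → Vec3) (p : Pt) : Vec3 :=
  fun j => ∑ i, u p i * pd i (fun q => F q j) p

/-- (∇u)ᵀ·A, the vector with i-th component ∑ⱼ (∂uʲ/∂xⁱ) Aⱼ. -/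
def gradTdot (u A : Pt → Vec3) (p : Pt) : Vec3 :=
  fun i => ∑ j, pd i (fun q => u q j) p * A p j

/-- A field is smooth when it is C^∞ jointly in time and space. -/
def SmoothS (f : Pt → ℝ) : Prop := ContDiff ℝ (⊤ : ℕ∞) f

/-- A vector field is smooth when it is C^∞ jointly in time and space. -/
def SmoothV (F : Pt → Vec3) : Prop := ContDiff ℝ (⊤ : ℕ∞) F



namespace SH

def D (v : Pt) (f : Pt → ℝ) (p : Pt) : ℝ := fderiv ℝ f p v
def e (i : Fin 3) : Pt := ((0:ℝ), Pi.single i 1)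
def et : Pt := ((1:ℝ), 0)

lemma dAt {f : Pt → ℝ} (hf : ContDiff ℝ (⊤:ℕ∞) f) (p : Pt) : DifferentiableAt ℝ f p :=
  (hf.differentiable (by simp)).differentiableAt

lemma pd_eq {f : Pt → ℝ} (hf : ContDiff ℝ (⊤:ℕ∞) f) (i : Fin 3) (p : Pt) :
    pd i f p = D (e i) f p := by
  have h1 : HasFDerivAt (fun x : Vec3 => (p.1, x)) (ContinuousLinearMap.inr ℝ ℝ Vec3) p.2 :=
    hasFDerivAt_prodMk_right p.1 p.2
  have h2 : HasFDerivAt f (fderiv ℝ f p) p := (dAt hf p).hasFDerivAt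
  have h3 : HasFDerivAt (fun x : Vec3 => f (p.1, x))
      ((fderiv ℝ f p).comp (ContinuousLinearMap.inr ℝ ℝ Vec3)) p.2 := by
    have := h2.comp p.2 (by simpa using h1)
    exact this
  rw [pd, h3.fderiv]
  rfl

lemma dt_eq {f : Pt → ℝ} (hf : ContDiff ℝ (⊤:ℕ∞) f) (p : Pt) :
    dt f p = D et f p := by
  have h1 : HasFDerivAt (fun s : ℝ => (s, p.2)) (ContinuousLinearMap.inl ℝ ℝ Vec3) p.1 :=
    hasFDerivAt_prodMk_left p.1 p.2
  have h2 : HasFDerivAt f (fderiv ℝ f p) p := (dAt hf p).hasFDerivAt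
  have h3 : HasFDerivAt (fun s : ℝ => f (s, p.2))
      ((fderiv ℝ f p).comp (ContinuousLinearMap.inl ℝ ℝ Vec3)) p.1 := by
    have := h2.comp p.1 (by simpa using h1)
    exact this
  rw [dt, h3.hasDerivAt.deriv]
  rfl

variable {f g : Pt → ℝ} {v w : Pt} {p : Pt} {c : ℝ}

lemma D_add (hf : ContDiff ℝ (⊤:ℕ∞) f) (hg : ContDiff ℝ (⊤:ℕ∞) g) :
    D v (fun q => f q + g q) p = D v f p + D v g p := by
  simp [D, fderiv_fun_add (dAt hf p) (dAt hg p)]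

lemma D_sub (hf : ContDiff ℝ (⊤:ℕ∞) f) (hg : ContDiff ℝ (⊤:ℕ∞) g) :
    D v (fun q => f q - g q) p = D v f p - D v g p := by
  simp [D, fderiv_fun_sub (dAt hf p) (dAt hg p)]

lemma D_mul (hf : ContDiff ℝ (⊤:ℕ∞) f) (hg : ContDiff ℝ (⊤:ℕ∞) g) :
    D v (fun q => f q * g q) p = D v f p * g p + f p * D v g p := by
  simp [D, fderiv_fun_mul (dAt hf p) (dAt hg p)]; ring

lemma D_div_const (hf : ContDiff ℝ (⊤:ℕ∞) f) :
    D v (fun q => f q / c) p = D v f p / c := by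
  simp [D, div_eq_mul_inv, fderiv_mul_const (dAt hf p)]; ring

lemma D_inv (hf : ContDiff ℝ (⊤:ℕ∞) f) (h0 : ∀ q, f q ≠ 0) :
    D v (fun q => (f q)⁻¹) p = -(D v f p) / (f p)^2 := by
  have h1 : HasFDerivAt (fun q => (f q)⁻¹)
      ((ContinuousLinearMap.smulRight (1 : ℝ →L[ℝ] ℝ) (-((f p)^2)⁻¹)).comp (fderiv ℝ f p)) p :=
    (hasDerivAt_inv (h0 p)).hasFDerivAt.comp p (dAt hf p).hasFDerivAt
  have := h1.fderiv
  simp only [D, this]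
  simp; ring

@[fun_prop]
lemma D_contDiff (v : Pt) (hf : ContDiff ℝ (⊤:ℕ∞) f) : ContDiff ℝ (⊤:ℕ∞) (D v f) := by
  have h1 : ContDiff ℝ (⊤:ℕ∞) (fderiv ℝ f) := hf.fderiv_right (by exact_mod_cast le_top)
  exact h1.clm_apply contDiff_const

lemma D_comm (hf : ContDiff ℝ (⊤:ℕ∞) f) (v w : Pt) (p : Pt) :
    D v (D w f) p = D w (D v f) p := by
  have hd : ∀ y, HasFDerivAt f (fderiv ℝ f y) y := fun y => (dAt hf y).hasFDerivAt
  have h1 : ContDiff ℝ (⊤:ℕ∞) (fderiv ℝ f) := hf.fderiv_right (by exact_mod_cast le_top)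
  have hx : HasFDerivAt (fderiv ℝ f) (fderiv ℝ (fderiv ℝ f) p) p :=
    ((h1.differentiable (by simp)).differentiableAt).hasFDerivAt
  have hsym := second_derivative_symmetric hd hx
  have key : ∀ a b : Pt, D a (D b f) p = fderiv ℝ (fderiv ℝ f) p a b := by
    intro a b
    have h2 : HasFDerivAt (fun q => fderiv ℝ f q b)
        ((ContinuousLinearMap.apply ℝ ℝ b).comp (fderiv ℝ (fderiv ℝ f) p)) p :=
      (ContinuousLinearMap.apply ℝ ℝ b).hasFDerivAt.comp p hx
    show fderiv ℝ (fun q => fderiv ℝ f q b) p a = _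
    rw [h2.fderiv]; rfl
  rw [key v w, key w v, hsym v w]

end SH

set_option maxHeartbeats 4000000
/-- with the barotropic Crocco momentum equation and mass
    continuity, the specific helicity obeys
    (∂/∂t + u·∇)((u·ω)/ρ) = −(ω/ρ)·∇(h − |u|²/2). -/
theorem specific_helicity_evolution
    (u : Pt → Vec3) (h ρ : Pt → ℝ)
    (hu : SmoothV u) (hh : SmoothS h) (hρ : SmoothS ρ)
    (hρpos : ∀ p : Pt, 0 < ρ p)
    (hmom : ∀ p : Pt,
      dtVec u p - cross3 (u p) (curl3 u p)
        + grad3 (fun q => h q + dot3 (u q) (u q) / 2) p = 0)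
    (hcont : ∀ p : Pt, dt ρ p + div3 (fun q => ρ q • u q) p = 0) :
    ∀ p : Pt,
      dt (fun q => dot3 (u q) (curl3 u q) / ρ q) p
        + dirD u (fun q => dot3 (u q) (curl3 u q) / ρ q) p
        = - dot3 ((ρ p)⁻¹ • curl3 u p)
            (grad3 (fun q => h q - dot3 (u q) (u q) / 2) p) := by
  intro p
  have hu' : ContDiff ℝ (⊤:ℕ∞) u := hu
  have hh' : ContDiff ℝ (⊤:ℕ∞) h := hh
  have hρ' : ContDiff ℝ (⊤:ℕ∞) ρ := hρ
  have hC : ∀ i : Fin 3, ContDiff ℝ (⊤:ℕ∞) (fun r : Pt => u r i) := by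
    intro i; fun_prop
  have hne : ∀ q : Pt, ρ q ≠ 0 := fun q => (hρpos q).ne'
  have hρinv : ContDiff ℝ (⊤:ℕ∞) (fun q : Pt => (ρ q)⁻¹) := hρ'.inv hne
  have hm0 : SH.D SH.et (fun r : Pt => u r 0) = (fun q : Pt => (u q 1 * (SH.D (SH.e 0) (fun r => u r 1) q - SH.D (SH.e 1) (fun r => u r 0) q) - u q 2 * (SH.D (SH.e 2) (fun r => u r 0) q - SH.D (SH.e 0) (fun r => u r 2) q)) - (SH.D (SH.e 0) h q + (u q 0 * SH.D (SH.e 0) (fun r => u r 0) q + u q 1 * SH.D (SH.e 0) (fun r => u r 1) q + u q 2 * SH.D (SH.e 0) (fun r => u r 2) q))) := by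
    funext q
    have H := congrFun (hmom q) 0
    simp (disch := first | assumption | fun_prop (disch := first | assumption | norm_num)) only [dtVec, grad3, cross3, curl3, dot3, Fin.sum_univ_three,
      Matrix.cons_val_zero, Matrix.cons_val_one, Matrix.head_cons, Matrix.cons_val_two,
      Matrix.tail_cons, Pi.add_apply, Pi.sub_apply, Pi.zero_apply,
      SH.pd_eq, SH.dt_eq, SH.D_add, SH.D_mul, SH.D_div_const] at H
    linear_combination H
  have hm1 : SH.D SH.et (fun r : Pt => u r 1) = (fun q : Pt => (u q 2 * (SH.D (SH.e 1) (fun r => u r 2) q - SH.D (SH.e 2) (fun r => u r 1) q) - u q 0 * (SH.D (SH.e 0) (fun r => u r 1) q - SH.D (SH.e 1) (fun r => u r 0) q)) - (SH.D (SH.e 1) h q + (u q 0 * SH.D (SH.e 1) (fun r => u r 0) q + u q 1 * SH.D (SH.e 1) (fun r => u r 1) q + u q 2 * SH.D (SH.e 1) (fun r => u r 2) q))) := by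
    funext q
    have H := congrFun (hmom q) 1
    simp (disch := first | assumption | fun_prop (disch := first | assumption | norm_num)) only [dtVec, grad3, cross3, curl3, dot3, Fin.sum_univ_three,
      Matrix.cons_val_zero, Matrix.cons_val_one, Matrix.head_cons, Matrix.cons_val_two,
      Matrix.tail_cons, Pi.add_apply, Pi.sub_apply, Pi.zero_apply,
      SH.pd_eq, SH.dt_eq, SH.D_add, SH.D_mul, SH.D_div_const] at H
    linear_combination H
  have hm2 : SH.D SH.et (fun r : Pt => u r 2) = (fun q : Pt => (u q 0 * (SH.D (SH.e 2) (fun r => u r 0) q - SH.D (SH.e 0) (fun r => u r 2) q) - u q 1 * (SH.D (SH.e 1) (fun r => u r 2) q - SH.D (SH.e 2) (fun r => u r 1) q)) - (SH.D (SH.e 2) h q + (u q 0 * SH.D (SH.e 2) (fun r => u r 0) q + u q 1 * SH.D (SH.e 2) (fun r => u r 1) q + u q 2 * SH.D (SH.e 2) (fun r => u r 2) q))) := by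
    funext q
    have H := congrFun (hmom q) 2
    simp (disch := first | assumption | fun_prop (disch := first | assumption | norm_num)) only [dtVec, grad3, cross3, curl3, dot3, Fin.sum_univ_three,
      Matrix.cons_val_zero, Matrix.cons_val_one, Matrix.head_cons, Matrix.cons_val_two,
      Matrix.tail_cons, Pi.add_apply, Pi.sub_apply, Pi.zero_apply,
      SH.pd_eq, SH.dt_eq, SH.D_add, SH.D_mul, SH.D_div_const] at H
    linear_combination H
  have hct : SH.D SH.et ρ p = -((SH.D (SH.e 0) ρ p * u p 0 + ρ p * SH.D (SH.e 0) (fun r => u r 0) p) + (SH.D (SH.e 1) ρ p * u p 1 + ρ p * SH.D (SH.e 1) (fun r => u r 1) p) + (SH.D (SH.e 2) ρ p * u p 2 + ρ p * SH.D (SH.e 2) (fun r => u r 2) p)) := by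
    have H := hcont p
    simp (disch := first | assumption | fun_prop (disch := first | assumption | norm_num)) only [div3, Fin.sum_univ_three, Pi.smul_apply, smul_eq_mul,
      SH.pd_eq, SH.dt_eq, SH.D_mul] at H
    linear_combination H
  have hsw : ∀ (f : Pt → ℝ), ContDiff ℝ (⊤:ℕ∞) f → ∀ v w : Pt,
      SH.D v (SH.D w f) p = SH.D w (SH.D v f) p := fun f hf v w => SH.D_comm hf v w p
  rw [show (fun q : Pt => dot3 (u q) (curl3 u q) / ρ q)
      = (fun q : Pt => dot3 (u q) (curl3 u q) * (ρ q)⁻¹) from funext fun q => div_eq_mul_inv _ _]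
  simp (disch := first | assumption | fun_prop (disch := first | assumption | norm_num)) only [dot3, curl3, grad3, dirD, Fin.sum_univ_three,
    Matrix.cons_val_zero, Matrix.cons_val_one, Matrix.head_cons, Matrix.cons_val_two,
    Matrix.tail_cons, Pi.smul_apply, smul_eq_mul,
    SH.pd_eq, SH.dt_eq, SH.D_add, SH.D_sub, SH.D_mul, SH.D_div_const, SH.D_inv]
  simp only [hsw (fun r : Pt => u r 0) (hC 0) SH.et, hsw (fun r : Pt => u r 1) (hC 1) SH.et,
    hsw (fun r : Pt => u r 2) (hC 2) SH.et]
  rw [hm0, hm1, hm2]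
  simp (disch := first | assumption | fun_prop (disch := first | assumption | norm_num)) only [SH.D_add, SH.D_sub, SH.D_mul]
  simp only [hsw (fun r : Pt => u r 0) (hC 0) (SH.e 1) (SH.e 0), hsw (fun r : Pt => u r 0) (hC 0) (SH.e 2) (SH.e 0), hsw (fun r : Pt => u r 0) (hC 0) (SH.e 2) (SH.e 1), hsw (fun r : Pt => u r 1) (hC 1) (SH.e 1) (SH.e 0), hsw (fun r : Pt => u r 1) (hC 1) (SH.e 2) (SH.e 0), hsw (fun r : Pt => u r 1) (hC 1) (SH.e 2) (SH.e 1), hsw (fun r : Pt => u r 2) (hC 2) (SH.e 1) (SH.e 0), hsw (fun r : Pt => u r 2) (hC 2) (SH.e 2) (SH.e 0), hsw (fun r : Pt => u r 2) (hC 2) (SH.e 2) (SH.e 1), hsw h hh' (SH.e 1) (SH.e 0), hsw h hh' (SH.e 2) (SH.e 0), hsw h hh' (SH.e 2) (SH.e 1)]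
  simp only [hct]
  field_simp [hne p]
  ring
end
end

section
/- Let u, ρ, S, T be smooth fields on ℝ × ℝ³ with ρ > 0 everywhere, and set ω = ∇×u. Assume the vorticity equation ∂ω/∂t − ∇×(u×ω) = ∇T × ∇S and the mass continuity equation ∂ρ/∂t + ∇·(ρu) = 0. Then (∂/∂t + u·∇)(ω/ρ) − ((ω/ρ)·∇)u = (∇T × ∇S)/ρ. -/
noncomputable section

namespace SVEaux

variable {f g : Pt → ℝ}

lemma smooth_fixT (hf : SmoothS f) (t : ℝ) :
    ContDiff ℝ (⊤:ℕ∞) (fun x : Vec3 => f (t, x)) := hf.comp (contDiff_const.prodMk contDiff_id)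

lemma diffT (hf : SmoothS f) (p : Pt) :
    DifferentiableAt ℝ (fun x : Vec3 => f (p.1, x)) p.2 :=
  ((smooth_fixT hf p.1).differentiable (by simp)) p.2

lemma diffX (hf : SmoothS f) (p : Pt) :
    DifferentiableAt ℝ (fun s : ℝ => f (s, p.2)) p.1 :=
  ((hf.comp (contDiff_id.prodMk contDiff_const)).differentiable (by simp)) p.1

lemma pd_const {c : ℝ} {i : Fin 3} {p : Pt} : pd i (fun _ : Pt => c) p = 0 := by
  simp [pd]

lemma pd_sub (hf : SmoothS f) (hg : SmoothS g) (i : Fin 3) (p : Pt) :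
    pd i (fun q => f q - g q) p = pd i f p - pd i g p := by
  show fderiv ℝ (fun x => f (p.1, x) - g (p.1, x)) p.2 _ = _
  rw [fderiv_fun_sub (diffT hf p) (diffT hg p)]
  simp [pd]

lemma pd_mul (hf : SmoothS f) (hg : SmoothS g) (i : Fin 3) (p : Pt) :
    pd i (fun q => f q * g q) p = pd i f p * g p + f p * pd i g p := by
  show fderiv ℝ (fun x => f (p.1, x) * g (p.1, x)) p.2 _ = _
  rw [fderiv_fun_mul (diffT hf p) (diffT hg p)]
  simp [pd]
  ring

lemma pd_inv (hf : SmoothS f) (h0 : ∀ q, f q ≠ 0) (i : Fin 3) (p : Pt) :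
    pd i (fun q => (f q)⁻¹) p = -pd i f p / (f p)^2 := by
  have hinv : SmoothS (fun q => (f q)⁻¹) := hf.inv h0
  have h1 : pd i (fun q => f q * (f q)⁻¹) p = 0 := by
    have he : (fun q : Pt => f q * (f q)⁻¹) = fun _ => (1:ℝ) :=
      funext fun q => mul_inv_cancel₀ (h0 q)
    rw [he, pd_const]
  rw [pd_mul hf hinv] at h1
  have hfp := h0 p
  field_simp at h1 ⊢
  linear_combination h1

lemma dt_const {c : ℝ} {p : Pt} : dt (fun _ : Pt => c) p = 0 := by simp [dt]

lemma dt_mul (hf : SmoothS f) (hg : SmoothS g) (p : Pt) :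
    dt (fun q => f q * g q) p = dt f p * g p + f p * dt g p := by
  show deriv (fun s => f (s, p.2) * g (s, p.2)) p.1 = _
  rw [deriv_fun_mul (diffX hf p) (diffX hg p)]
  rfl

lemma dt_inv (hf : SmoothS f) (h0 : ∀ q, f q ≠ 0) (p : Pt) :
    dt (fun q => (f q)⁻¹) p = -dt f p / (f p)^2 := by
  have hinv : SmoothS (fun q => (f q)⁻¹) := hf.inv h0
  have h1 : dt (fun q => f q * (f q)⁻¹) p = 0 := by
    have he : (fun q : Pt => f q * (f q)⁻¹) = fun _ => (1:ℝ) :=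
      funext fun q => mul_inv_cancel₀ (h0 q)
    rw [he, dt_const]
  rw [dt_mul hf hinv] at h1
  have hfp := h0 p
  field_simp at h1 ⊢
  linear_combination h1

lemma pd_eq (hf : SmoothS f) (a : Fin 3) (q : Pt) :
    pd a f q = fderiv ℝ f q (0, Pi.single a 1) := by
  have h1 : HasFDerivAt (fun x : Vec3 => ((q.1, x) : Pt)) (ContinuousLinearMap.inr ℝ ℝ Vec3) q.2 :=
    (hasFDerivAt_const q.1 q.2).prodMk (hasFDerivAt_id q.2)
  have h2 : HasFDerivAt (fun x : Vec3 => f (q.1, x))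
      ((fderiv ℝ f q).comp (ContinuousLinearMap.inr ℝ ℝ Vec3)) q.2 :=
    (((hf.differentiable (by simp)) q).hasFDerivAt).comp q.2 h1
  rw [pd, h2.fderiv]
  simp

lemma smooth_pd (hf : SmoothS f) (a : Fin 3) : SmoothS (fun q => pd a f q) := by
  have he : (fun q => pd a f q) = fun q => fderiv ℝ f q (0, Pi.single a 1) :=
    funext fun q => pd_eq hf a q
  rw [SmoothS, he]
  exact (hf.fderiv_right (by exact_mod_cast le_top)).clm_apply contDiff_const

lemma pd_comm (hf : SmoothS f) (a b : Fin 3) (p : Pt) :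
    pd a (fun q => pd b f q) p = pd b (fun q => pd a f q) p := by
  set g : Vec3 → ℝ := fun x => f (p.1, x) with hg
  have hgs : ContDiff ℝ (⊤:ℕ∞) g := smooth_fixT hf p.1
  have hD : ContDiff ℝ (⊤:ℕ∞) (fderiv ℝ g) := hgs.fderiv_right (by exact_mod_cast le_top)
  have key : ∀ c d : Fin 3, pd c (fun q => pd d f q) p
      = fderiv ℝ (fderiv ℝ g) p.2 (Pi.single c 1) (Pi.single d 1) := by
    intro c d
    show fderiv ℝ (fun x : Vec3 => pd d f (p.1, x)) p.2 _ = _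
    rw [show (fun x : Vec3 => pd d f (p.1, x)) = fun x => fderiv ℝ g x (Pi.single d 1) from rfl]
    rw [fderiv_clm_apply (hD.differentiable (by simp) p.2)
      (differentiableAt_const _)]
    simp
  rw [key a b, key b a]
  exact second_derivative_symmetric
    (fun y => ((hgs.differentiable (by simp)) y).hasFDerivAt)
    ((hD.differentiable (by simp) p.2).hasFDerivAt) _ _

def Cyc (i j k : Fin 3) : Prop :=
  (i = 0 ∧ j = 1 ∧ k = 2) ∨ (i = 1 ∧ j = 2 ∧ k = 0) ∨ (i = 2 ∧ j = 0 ∧ k = 1)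

lemma Cyc.rot {i j k : Fin 3} (h : Cyc i j k) : Cyc j k i := by
  rcases h with ⟨h1,h2,h3⟩|⟨h1,h2,h3⟩|⟨h1,h2,h3⟩ <;> subst_vars <;> simp [Cyc]

lemma exists_cyc (i : Fin 3) : ∃ j k, Cyc i j k := by
  fin_cases i
  · exact ⟨1, 2, Or.inl ⟨rfl, rfl, rfl⟩⟩
  · exact ⟨2, 0, Or.inr (Or.inl ⟨rfl, rfl, rfl⟩)⟩
  · exact ⟨0, 1, Or.inr (Or.inr ⟨rfl, rfl, rfl⟩)⟩

lemma cross3_cyc {i j k : Fin 3} (h : Cyc i j k) (a b : Vec3) :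
    cross3 a b i = a j * b k - a k * b j := by
  rcases h with ⟨h1,h2,h3⟩|⟨h1,h2,h3⟩|⟨h1,h2,h3⟩ <;> subst_vars <;> simp [cross3]

lemma curl3_cyc {i j k : Fin 3} (h : Cyc i j k) (F : Pt → Vec3) (p : Pt) :
    curl3 F p i = pd j (fun q => F q k) p - pd k (fun q => F q j) p := by
  rcases h with ⟨h1,h2,h3⟩|⟨h1,h2,h3⟩|⟨h1,h2,h3⟩ <;> subst_vars <;> simp [curl3]

lemma sum_cyc {i j k : Fin 3} (h : Cyc i j k) (f : Fin 3 → ℝ) :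
    ∑ a, f a = f i + f j + f k := by
  rcases h with ⟨h1,h2,h3⟩|⟨h1,h2,h3⟩|⟨h1,h2,h3⟩ <;> subst_vars <;>
    simp [Fin.sum_univ_three] <;> ring

lemma key (r dρ dω Ωi Ωj Ωk Pii Pji Pki Qj Qk Di Dj Dk ui uj uk Uii Uji Uki Ujj Ukk Gi : ℝ)
    (hr : r ≠ 0)
    (E1 : dω = Uji*Ωj + ui*Qj - (Ujj*Ωi + uj*Pji) - (Ukk*Ωi + uk*Pki - (Uki*Ωk + ui*Qk)) + Gi)
    (E2 : Pii + Qj + Qk = 0)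
    (E3 : dρ + (Di*ui + r*Uii + (Dj*uj + r*Ujj) + (Dk*uk + r*Ukk)) = 0) :
    -dρ/r^2*Ωi + r⁻¹*dω
      + (ui*(-Di/r^2*Ωi + r⁻¹*Pii) + uj*(-Dj/r^2*Ωi + r⁻¹*Pji) + uk*(-Dk/r^2*Ωi + r⁻¹*Pki))
      - (r⁻¹*Ωi*Uii + r⁻¹*Ωj*Uji + r⁻¹*Ωk*Uki) = r⁻¹*Gi := by
  subst E1
  field_simp
  linear_combination (r*ui)*E2 - Ωi*E3

end SVEaux

open SVEaux

/-- vorticity equation and mass continuity imply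
    (∂/∂t + u·∇)(ω/ρ) − ((ω/ρ)·∇)u = (∇T × ∇S)/ρ. -/
theorem specific_vorticity_evolution
    (u : Pt → Vec3) (ρ S T : Pt → ℝ)
    (hu : SmoothV u) (hρ : SmoothS ρ) (hS : SmoothS S) (hT : SmoothS T)
    (hρpos : ∀ p : Pt, 0 < ρ p)
    (hvort : ∀ p : Pt,
      dtVec (fun q => curl3 u q) p
        - curl3 (fun q => cross3 (u q) (curl3 u q)) p
        = cross3 (grad3 T p) (grad3 S p))
    (hcont : ∀ p : Pt, dt ρ p + div3 (fun q => ρ q • u q) p = 0) :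
    ∀ p : Pt,
      dtVec (fun q => (ρ q)⁻¹ • curl3 u q) p
        + dirDVec u (fun q => (ρ q)⁻¹ • curl3 u q) p
        - dirDVec (fun q => (ρ q)⁻¹ • curl3 u q) u p
        = (ρ p)⁻¹ • cross3 (grad3 T p) (grad3 S p) := by
  intro p
  have hρ0 : ∀ q, ρ q ≠ 0 := fun q => ne_of_gt (hρpos q)
  have hρi : SmoothS (fun q => (ρ q)⁻¹) := hρ.inv hρ0
  have hus : ∀ a, SmoothS (fun q => u q a) :=
    fun a => by exact (ContinuousLinearMap.proj a).contDiff.comp hu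
  have hωs : ∀ a : Fin 3, SmoothS (fun q => curl3 u q a) := by
    intro a
    obtain ⟨b, c, h⟩ := exists_cyc a
    have he : (fun q => curl3 u q a)
        = fun q => pd b (fun r => u r c) q - pd c (fun r => u r b) q :=
      funext fun q => curl3_cyc h u q
    rw [SmoothS, he]
    exact ContDiff.sub (smooth_pd (hus c) b) (smooth_pd (hus b) c)
  funext i
  obtain ⟨j, k, hcyc⟩ := exists_cyc i
  -- E1 : vorticity equation, i-th component, fully expanded
  have E1 : dt (fun q => curl3 u q i) p
      = (pd j (fun q => u q i) p * curl3 u p j + u p i * pd j (fun q => curl3 u q j) p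
        - (pd j (fun q => u q j) p * curl3 u p i + u p j * pd j (fun q => curl3 u q i) p))
      - (pd k (fun q => u q k) p * curl3 u p i + u p k * pd k (fun q => curl3 u q i) p
        - (pd k (fun q => u q i) p * curl3 u p k + u p i * pd k (fun q => curl3 u q k) p))
      + cross3 (grad3 T p) (grad3 S p) i := by
    have hvi := congrFun (hvort p) i
    simp only [Pi.sub_apply, dtVec] at hvi
    rw [curl3_cyc hcyc] at hvi
    rw [show (fun q => cross3 (u q) (curl3 u q) k)
          = fun q => u q i * curl3 u q j - u q j * curl3 u q i from
        funext fun q => cross3_cyc hcyc.rot.rot (u q) (curl3 u q)] at hvi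
    rw [show (fun q => cross3 (u q) (curl3 u q) j)
          = fun q => u q k * curl3 u q i - u q i * curl3 u q k from
        funext fun q => cross3_cyc hcyc.rot (u q) (curl3 u q)] at hvi
    rw [pd_sub (ContDiff.mul (hus i) (hωs j)) (ContDiff.mul (hus j) (hωs i)) j p,
        pd_sub (ContDiff.mul (hus k) (hωs i)) (ContDiff.mul (hus i) (hωs k)) k p,
        pd_mul (hus i) (hωs j) j p, pd_mul (hus j) (hωs i) j p,
        pd_mul (hus k) (hωs i) k p, pd_mul (hus i) (hωs k) k p] at hvi
    linarith [hvi]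
  -- E2 : divergence of curl vanishes
  have E2 : pd i (fun q => curl3 u q i) p + pd j (fun q => curl3 u q j) p
      + pd k (fun q => curl3 u q k) p = 0 := by
    have e1 : (fun q => curl3 u q i)
        = fun q => pd j (fun r => u r k) q - pd k (fun r => u r j) q :=
      funext fun q => curl3_cyc hcyc u q
    have e2 : (fun q => curl3 u q j)
        = fun q => pd k (fun r => u r i) q - pd i (fun r => u r k) q :=
      funext fun q => curl3_cyc hcyc.rot u q
    have e3 : (fun q => curl3 u q k)
        = fun q => pd i (fun r => u r j) q - pd j (fun r => u r i) q :=
      funext fun q => curl3_cyc hcyc.rot.rot u q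
    rw [e1, e2, e3,
        pd_sub (smooth_pd (hus k) j) (smooth_pd (hus j) k) i p,
        pd_sub (smooth_pd (hus i) k) (smooth_pd (hus k) i) j p,
        pd_sub (smooth_pd (hus j) i) (smooth_pd (hus i) j) k p]
    have c1 := pd_comm (hus k) i j p
    have c2 := pd_comm (hus j) i k p
    have c3 := pd_comm (hus i) j k p
    linarith
  -- E3 : continuity equation expanded
  have E3 : dt ρ p
      + (pd i ρ p * u p i + ρ p * pd i (fun q => u q i) p
        + (pd j ρ p * u p j + ρ p * pd j (fun q => u q j) p)
        + (pd k ρ p * u p k + ρ p * pd k (fun q => u q k) p)) = 0 := by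
    have h := hcont p
    simp only [div3, Pi.smul_apply, smul_eq_mul] at h
    rw [sum_cyc hcyc] at h
    rw [pd_mul hρ (hus i) i p, pd_mul hρ (hus j) j p, pd_mul hρ (hus k) k p] at h
    linarith
  -- expand the goal
  simp only [dtVec, dirDVec, Pi.add_apply, Pi.sub_apply, Pi.smul_apply, smul_eq_mul]
  rw [sum_cyc hcyc, sum_cyc hcyc]
  rw [dt_mul hρi (hωs i) p, dt_inv hρ hρ0 p,
      pd_mul hρi (hωs i) i p, pd_mul hρi (hωs i) j p, pd_mul hρi (hωs i) k p,
      pd_inv hρ hρ0 i p, pd_inv hρ hρ0 j p, pd_inv hρ hρ0 k p]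
  have hr := hρ0 p
  exact key (ρ p) (dt ρ p) (dt (fun q => curl3 u q i) p)
    (curl3 u p i) (curl3 u p j) (curl3 u p k)
    (pd i (fun q => curl3 u q i) p) (pd j (fun q => curl3 u q i) p) (pd k (fun q => curl3 u q i) p)
    (pd j (fun q => curl3 u q j) p) (pd k (fun q => curl3 u q k) p)
    (pd i ρ p) (pd j ρ p) (pd k ρ p) (u p i) (u p j) (u p k)
    (pd i (fun q => u q i) p) (pd j (fun q => u q i) p) (pd k (fun q => u q i) p)
    (pd j (fun q => u q j) p) (pd k (fun q => u q k) p)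
    (cross3 (grad3 T p) (grad3 S p) i) hr E1 E2 E3
end
end

section
/- (Nonlocal cross helicity conservation law) Let u, B, ρ, S, T, h, r be smooth fields on ℝ × ℝ³ (u and B ℝ³-valued, the rest scalar) with ρ > 0 everywhere, let μ₀ > 0 be a constant, and assume: Faraday's equation ∂B/∂t − ∇×(u×B) = 0; Gauss's law ∇·B = 0; the MHD momentum equation ∂u/∂t − u×(∇×u) + ∇(h + |u|²/2) − ((∇×B)×B)/(μ₀ρ) = T∇S; the mass continuity equation ∂ρ/∂t + ∇·(ρu) = 0; the entropy advection equation ∂S/∂t + u·∇S = 0; and the nonlocal-potential equation (∂/∂t + u·∇)r = −T. Then ∂/∂t [ B·(u + r∇S) ] + ∇·{ u [ B·(u + r∇S) ] + (h − |u|²/2) B } = 0. -/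
noncomputable section

/-! ### Auxiliary calculus lemmas -/

lemma smooth_diff' {f : Pt → ℝ} (hf : ContDiff ℝ (⊤:ℕ∞) f) : Differentiable ℝ f :=
  hf.differentiable (by norm_cast)

lemma pdeq {f : Pt → ℝ} (hf : ContDiff ℝ (⊤:ℕ∞) f) (i : Fin 3) (p : Pt) :
    pd i f p = fderiv ℝ f p ((0:ℝ), Pi.single i (1:ℝ)) := by
  have h1 : HasFDerivAt (fun x : Vec3 => (p.1, x))
      ((0 : Vec3 →L[ℝ] ℝ).prod (ContinuousLinearMap.id ℝ Vec3)) p.2 :=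
    HasFDerivAt.prodMk (hasFDerivAt_const p.1 p.2) (hasFDerivAt_id p.2)
  have h2 := (smooth_diff' hf (p.1, p.2)).hasFDerivAt.comp p.2 h1
  rw [Prod.mk.eta] at h2
  have h2' : HasFDerivAt (fun x => f (p.1, x))
      ((fderiv ℝ f p).comp ((0 : Vec3 →L[ℝ] ℝ).prod (ContinuousLinearMap.id ℝ Vec3))) p.2 := h2
  rw [pd, h2'.fderiv]; rfl

lemma dteq {f : Pt → ℝ} (hf : ContDiff ℝ (⊤:ℕ∞) f) (p : Pt) :
    dt f p = fderiv ℝ f p ((1:ℝ), (0:Vec3)) := by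
  have h1 : HasDerivAt (fun s : ℝ => ((s, p.2) : Pt)) ((1:ℝ), (0:Vec3)) p.1 :=
    HasDerivAt.prodMk (hasDerivAt_id p.1) (hasDerivAt_const p.1 p.2)
  have h2 := (smooth_diff' hf (p.1, p.2)).hasFDerivAt.comp_hasDerivAt p.1 h1
  rw [Prod.mk.eta] at h2
  exact h2.deriv

lemma smooth_fd {f : Pt → ℝ} (hf : ContDiff ℝ (⊤:ℕ∞) f) (v : Pt) :
    ContDiff ℝ (⊤:ℕ∞) (fun q => fderiv ℝ f q v) :=
  (ContinuousLinearMap.apply ℝ ℝ v).contDiff.comp (hf.fderiv_right (by norm_cast))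

lemma fd_fd {f : Pt → ℝ} (hf : ContDiff ℝ (⊤:ℕ∞) f) (p v w : Pt) :
    fderiv ℝ (fun q => fderiv ℝ f q w) p v = fderiv ℝ (fderiv ℝ f) p v w := by
  have hfd2 : ContDiff ℝ (⊤:ℕ∞) (fderiv ℝ f) := hf.fderiv_right (by norm_cast)
  have h1 : HasFDerivAt (fderiv ℝ f) (fderiv ℝ (fderiv ℝ f) p) p :=
    ((hfd2.differentiable (by norm_cast)) p).hasFDerivAt
  have h2 := (ContinuousLinearMap.apply ℝ ℝ w).hasFDerivAt.comp p h1
  have h2' : HasFDerivAt (fun q => fderiv ℝ f q w)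
      ((ContinuousLinearMap.apply ℝ ℝ w).comp (fderiv ℝ (fderiv ℝ f) p)) p := h2
  rw [h2'.fderiv]; rfl

lemma fd_swap {f : Pt → ℝ} (hf : ContDiff ℝ (⊤:ℕ∞) f) (p v w : Pt) :
    fderiv ℝ (fun q => fderiv ℝ f q w) p v = fderiv ℝ (fun q => fderiv ℝ f q v) p w := by
  rw [fd_fd hf, fd_fd hf]
  exact (hf.contDiffAt.isSymmSndFDerivAt (by rw [minSmoothness_of_isRCLikeNormedField]; exact WithTop.coe_le_coe.mpr (le_top : (2:ℕ∞) ≤ ⊤))) v w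

lemma fd_add {f g : Pt → ℝ} {p : Pt} (hf : DifferentiableAt ℝ f p)
    (hg : DifferentiableAt ℝ g p) (v : Pt) :
    fderiv ℝ (fun q => f q + g q) p v = fderiv ℝ f p v + fderiv ℝ g p v := by
  rw [fderiv_fun_add hf hg]; rfl

lemma fd_sub {f g : Pt → ℝ} {p : Pt} (hf : DifferentiableAt ℝ f p)
    (hg : DifferentiableAt ℝ g p) (v : Pt) :
    fderiv ℝ (fun q => f q - g q) p v = fderiv ℝ f p v - fderiv ℝ g p v := by
  rw [fderiv_fun_sub hf hg]; rfl

lemma fd_mul {f g : Pt → ℝ} {p : Pt} (hf : DifferentiableAt ℝ f p)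
    (hg : DifferentiableAt ℝ g p) (v : Pt) :
    fderiv ℝ (fun q => f q * g q) p v = f p * fderiv ℝ g p v + g p * fderiv ℝ f p v := by
  rw [fderiv_fun_mul hf hg]; simp [mul_comm]

lemma fd_div2 {f : Pt → ℝ} {p : Pt} (hf : DifferentiableAt ℝ f p) (v : Pt) :
    fderiv ℝ (fun q => f q / 2) p v = fderiv ℝ f p v / 2 := by
  simp only [div_eq_mul_inv]
  rw [fderiv_mul_const hf]
  simp [mul_comm]

set_option maxHeartbeats 4000000 in
/-- nonlocal cross helicity conservation law: for a
    non-barotropic MHD flow with nonlocal potential r, the quantity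
    B·(u + r∇S) obeys a local conservation law. -/
theorem nonlocal_cross_helicity_conservation
    (u B : Pt → Vec3) (ρ S T h r : Pt → ℝ) (μ₀ : ℝ)
    (hu : SmoothV u) (hB : SmoothV B) (hρ : SmoothS ρ) (hS : SmoothS S)
    (hT : SmoothS T) (hh : SmoothS h) (hr : SmoothS r)
    (hρpos : ∀ p : Pt, 0 < ρ p) (hμ₀ : 0 < μ₀)
    (hfar : ∀ p : Pt,
      dtVec B p - curl3 (fun q => cross3 (u q) (B q)) p = 0)
    (hgauss : ∀ p : Pt, div3 B p = 0)
    (hmom : ∀ p : Pt,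
      dtVec u p - cross3 (u p) (curl3 u p)
        + grad3 (fun q => h q + dot3 (u q) (u q) / 2) p
        - (μ₀ * ρ p)⁻¹ • cross3 (curl3 B p) (B p)
        = T p • grad3 S p)
    (hcont : ∀ p : Pt, dt ρ p + div3 (fun q => ρ q • u q) p = 0)
    (hSadv : ∀ p : Pt, dt S p + dirD u S p = 0)
    (hrev : ∀ p : Pt, dt r p + dirD u r p = - T p) :
    ∀ p : Pt,
      dt (fun q => dot3 (B q) (u q + r q • grad3 S q)) p
        + div3 (fun q =>
            dot3 (B q) (u q + r q • grad3 S q) • u q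
              + (h q - dot3 (u q) (u q) / 2) • B q) p = 0 := by
  intro p
  have huc : ContDiff ℝ (⊤:ℕ∞) u := hu
  have hBc : ContDiff ℝ (⊤:ℕ∞) B := hB
  have hrc : ContDiff ℝ (⊤:ℕ∞) r := hr
  have hhc : ContDiff ℝ (⊤:ℕ∞) h := hh
  have hSc : ContDiff ℝ (⊤:ℕ∞) S := hS
  have hud : Differentiable ℝ u := huc.differentiable (by norm_cast)
  have hBd : Differentiable ℝ B := hBc.differentiable (by norm_cast)
  have hrd : Differentiable ℝ r := smooth_diff' hrc
  have hhd : Differentiable ℝ h := smooth_diff' hhc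
  have hSd : Differentiable ℝ S := smooth_diff' hSc
  have hS0c : ContDiff ℝ (⊤:ℕ∞) (fun q => fderiv ℝ S q ((0:ℝ), Pi.single (0:Fin 3) (1:ℝ))) := smooth_fd hSc _
  have hS0d : Differentiable ℝ (fun q => fderiv ℝ S q ((0:ℝ), Pi.single (0:Fin 3) (1:ℝ))) := smooth_diff' hS0c
  have hS1c : ContDiff ℝ (⊤:ℕ∞) (fun q => fderiv ℝ S q ((0:ℝ), Pi.single (1:Fin 3) (1:ℝ))) := smooth_fd hSc _
  have hS1d : Differentiable ℝ (fun q => fderiv ℝ S q ((0:ℝ), Pi.single (1:Fin 3) (1:ℝ))) := smooth_diff' hS1c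
  have hS2c : ContDiff ℝ (⊤:ℕ∞) (fun q => fderiv ℝ S q ((0:ℝ), Pi.single (2:Fin 3) (1:ℝ))) := smooth_fd hSc _
  have hS2d : Differentiable ℝ (fun q => fderiv ℝ S q ((0:ℝ), Pi.single (2:Fin 3) (1:ℝ))) := smooth_diff' hS2c
  have hStc : ContDiff ℝ (⊤:ℕ∞) (fun q => fderiv ℝ S q ((1:ℝ), (0:Vec3))) := smooth_fd hSc _
  have hStd : Differentiable ℝ (fun q => fderiv ℝ S q ((1:ℝ), (0:Vec3))) := smooth_diff' hStc
  have f0 := congrFun (hfar p) 0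
  simp (disch := fun_prop (disch := norm_num)) only [dtVec, div3, curl3, cross3, grad3, dot3, dirD, Fin.sum_univ_three, Pi.add_apply, Pi.sub_apply, Pi.smul_apply, Pi.zero_apply, smul_eq_mul, Matrix.cons_val_zero, Matrix.cons_val_one, Matrix.cons_val_two, Matrix.head_cons, Matrix.tail_cons, dteq, pdeq, fd_add, fd_sub, fd_mul, fd_div2] at f0
  have f1 := congrFun (hfar p) 1
  simp (disch := fun_prop (disch := norm_num)) only [dtVec, div3, curl3, cross3, grad3, dot3, dirD, Fin.sum_univ_three, Pi.add_apply, Pi.sub_apply, Pi.smul_apply, Pi.zero_apply, smul_eq_mul, Matrix.cons_val_zero, Matrix.cons_val_one, Matrix.cons_val_two, Matrix.head_cons, Matrix.tail_cons, dteq, pdeq, fd_add, fd_sub, fd_mul, fd_div2] at f1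
  have f2 := congrFun (hfar p) 2
  simp (disch := fun_prop (disch := norm_num)) only [dtVec, div3, curl3, cross3, grad3, dot3, dirD, Fin.sum_univ_three, Pi.add_apply, Pi.sub_apply, Pi.smul_apply, Pi.zero_apply, smul_eq_mul, Matrix.cons_val_zero, Matrix.cons_val_one, Matrix.cons_val_two, Matrix.head_cons, Matrix.tail_cons, dteq, pdeq, fd_add, fd_sub, fd_mul, fd_div2] at f2
  have m0 := congrFun (hmom p) 0
  simp (disch := fun_prop (disch := norm_num)) only [dtVec, div3, curl3, cross3, grad3, dot3, dirD, Fin.sum_univ_three, Pi.add_apply, Pi.sub_apply, Pi.smul_apply, Pi.zero_apply, smul_eq_mul, Matrix.cons_val_zero, Matrix.cons_val_one, Matrix.cons_val_two, Matrix.head_cons, Matrix.tail_cons, dteq, pdeq, fd_add, fd_sub, fd_mul, fd_div2] at m0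
  have m1 := congrFun (hmom p) 1
  simp (disch := fun_prop (disch := norm_num)) only [dtVec, div3, curl3, cross3, grad3, dot3, dirD, Fin.sum_univ_three, Pi.add_apply, Pi.sub_apply, Pi.smul_apply, Pi.zero_apply, smul_eq_mul, Matrix.cons_val_zero, Matrix.cons_val_one, Matrix.cons_val_two, Matrix.head_cons, Matrix.tail_cons, dteq, pdeq, fd_add, fd_sub, fd_mul, fd_div2] at m1
  have m2 := congrFun (hmom p) 2
  simp (disch := fun_prop (disch := norm_num)) only [dtVec, div3, curl3, cross3, grad3, dot3, dirD, Fin.sum_univ_three, Pi.add_apply, Pi.sub_apply, Pi.smul_apply, Pi.zero_apply, smul_eq_mul, Matrix.cons_val_zero, Matrix.cons_val_one, Matrix.cons_val_two, Matrix.head_cons, Matrix.tail_cons, dteq, pdeq, fd_add, fd_sub, fd_mul, fd_div2] at m2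
  have gss := hgauss p
  simp (disch := fun_prop (disch := norm_num)) only [dtVec, div3, curl3, cross3, grad3, dot3, dirD, Fin.sum_univ_three, Pi.add_apply, Pi.sub_apply, Pi.smul_apply, Pi.zero_apply, smul_eq_mul, Matrix.cons_val_zero, Matrix.cons_val_one, Matrix.cons_val_two, Matrix.head_cons, Matrix.tail_cons, dteq, pdeq, fd_add, fd_sub, fd_mul, fd_div2] at gss
  have rv := hrev p
  simp (disch := fun_prop (disch := norm_num)) only [dtVec, div3, curl3, cross3, grad3, dot3, dirD, Fin.sum_univ_three, Pi.add_apply, Pi.sub_apply, Pi.smul_apply, Pi.zero_apply, smul_eq_mul, Matrix.cons_val_zero, Matrix.cons_val_one, Matrix.cons_val_two, Matrix.head_cons, Matrix.tail_cons, dteq, pdeq, fd_add, fd_sub, fd_mul, fd_div2] at rv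
  have hz : (fun q => fderiv ℝ S q ((1:ℝ), (0:Vec3)) + (u q 0 * fderiv ℝ S q ((0:ℝ), Pi.single (0:Fin 3) (1:ℝ)) + u q 1 * fderiv ℝ S q ((0:ℝ), Pi.single (1:Fin 3) (1:ℝ)) + u q 2 * fderiv ℝ S q ((0:ℝ), Pi.single (2:Fin 3) (1:ℝ)))) = fun _ => (0:ℝ) := by
    funext q
    have hq := hSadv q
    simp (disch := fun_prop (disch := norm_num)) only [dtVec, div3, curl3, cross3, grad3, dot3, dirD, Fin.sum_univ_three, Pi.add_apply, Pi.sub_apply, Pi.smul_apply, Pi.zero_apply, smul_eq_mul, Matrix.cons_val_zero, Matrix.cons_val_one, Matrix.cons_val_two, Matrix.head_cons, Matrix.tail_cons, dteq, pdeq, fd_add, fd_sub, fd_mul, fd_div2] at hq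
    linarith
  have ds0 := congrArg (fun F : Pt → ℝ => fderiv ℝ F p ((0:ℝ), Pi.single (0:Fin 3) (1:ℝ))) hz
  simp (disch := fun_prop (disch := norm_num)) only [fd_add, fd_mul, fderiv_const, fderiv_const_apply, Pi.zero_apply, ContinuousLinearMap.zero_apply] at ds0
  have ds1 := congrArg (fun F : Pt → ℝ => fderiv ℝ F p ((0:ℝ), Pi.single (1:Fin 3) (1:ℝ))) hz
  simp (disch := fun_prop (disch := norm_num)) only [fd_add, fd_mul, fderiv_const, fderiv_const_apply, Pi.zero_apply, ContinuousLinearMap.zero_apply] at ds1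
  have ds2 := congrArg (fun F : Pt → ℝ => fderiv ℝ F p ((0:ℝ), Pi.single (2:Fin 3) (1:ℝ))) hz
  simp (disch := fun_prop (disch := norm_num)) only [fd_add, fd_mul, fderiv_const, fderiv_const_apply, Pi.zero_apply, ContinuousLinearMap.zero_apply] at ds2
  have st0 := fd_swap hSc p ((0:ℝ), Pi.single (0:Fin 3) (1:ℝ)) ((1:ℝ), (0:Vec3))
  have st1 := fd_swap hSc p ((0:ℝ), Pi.single (1:Fin 3) (1:ℝ)) ((1:ℝ), (0:Vec3))
  have st2 := fd_swap hSc p ((0:ℝ), Pi.single (2:Fin 3) (1:ℝ)) ((1:ℝ), (0:Vec3))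
  have s01 := fd_swap hSc p ((0:ℝ), Pi.single (0:Fin 3) (1:ℝ)) ((0:ℝ), Pi.single (1:Fin 3) (1:ℝ))
  have s02 := fd_swap hSc p ((0:ℝ), Pi.single (0:Fin 3) (1:ℝ)) ((0:ℝ), Pi.single (2:Fin 3) (1:ℝ))
  have s12 := fd_swap hSc p ((0:ℝ), Pi.single (1:Fin 3) (1:ℝ)) ((0:ℝ), Pi.single (2:Fin 3) (1:ℝ))
  simp (disch := fun_prop (disch := norm_num)) only [dtVec, div3, curl3, cross3, grad3, dot3, dirD, Fin.sum_univ_three, Pi.add_apply, Pi.sub_apply, Pi.smul_apply, Pi.zero_apply, smul_eq_mul, Matrix.cons_val_zero, Matrix.cons_val_one, Matrix.cons_val_two, Matrix.head_cons, Matrix.tail_cons, dteq, pdeq, fd_add, fd_sub, fd_mul, fd_div2]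
  linear_combination
    (u p 0 + r p * (fderiv ℝ S p ((0:ℝ), Pi.single (0:Fin 3) (1:ℝ)))) * f0 +
    (u p 1 + r p * (fderiv ℝ S p ((0:ℝ), Pi.single (1:Fin 3) (1:ℝ)))) * f1 +
    (u p 2 + r p * (fderiv ℝ S p ((0:ℝ), Pi.single (2:Fin 3) (1:ℝ)))) * f2 +
    B p 0 * m0 +
    B p 1 * m1 +
    B p 2 * m2 +
    (h p - (u p 0 * u p 0 + u p 1 * u p 1 + u p 2 * u p 2) / 2 + ((u p 0 + r p * (fderiv ℝ S p ((0:ℝ), Pi.single (0:Fin 3) (1:ℝ)))) * u p 0 + (u p 1 + r p * (fderiv ℝ S p ((0:ℝ), Pi.single (1:Fin 3) (1:ℝ)))) * u p 1 + (u p 2 + r p * (fderiv ℝ S p ((0:ℝ), Pi.single (2:Fin 3) (1:ℝ)))) * u p 2)) * gss +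
    (B p 0 * (fderiv ℝ S p ((0:ℝ), Pi.single (0:Fin 3) (1:ℝ))) + B p 1 * (fderiv ℝ S p ((0:ℝ), Pi.single (1:Fin 3) (1:ℝ))) + B p 2 * (fderiv ℝ S p ((0:ℝ), Pi.single (2:Fin 3) (1:ℝ)))) * rv +
    (r p * B p 0) * ds0 +
    (r p * B p 1) * ds1 +
    (r p * B p 2) * ds2 +
    (-(r p * B p 0)) * st0 +
    (-(r p * B p 1)) * st1 +
    (-(r p * B p 2)) * st2 +
    (-(r p * (u p 1 * B p 0 - u p 0 * B p 1))) * s01 +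
    (-(r p * (u p 2 * B p 0 - u p 0 * B p 2))) * s02 +
    (-(r p * (u p 2 * B p 1 - u p 1 * B p 2))) * s12
end
end
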